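/- Let α ∈ (1,2) and let K ≥ 3 be an integer. Define σ_{α,K} = ( ((1−1/K)^{(1−α)/(3−α)} + (1+1/K)^{(1−α)/(3−α)})/2 )^{3−α}. Then 1 + ((α−1)/(3−α))·(1/K²) ≤ σ_{α,K} ≤ 1 + (7(α−1)/(6(3−α)))·(1/K²). -/

import Mathlib

open Real Set

private lemma nonneg_of_deriv_aux (F F' : ℝ → ℝ)
    (hd : ∀ t ∈ Icc (0:ℝ) (1/3), HasDerivAt F (F' t) t)
    (h' : ∀ t ∈ Icc (0:ℝ) (1/3), 0 ≤ F' t)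
    (h0 : F 0 = 0) :
    ∀ y ∈ Icc (0:ℝ) (1/3), 0 ≤ F y := by
  intro y hy
  have hmono : MonotoneOn F (Icc (0:ℝ) (1/3)) := by
    apply monotoneOn_of_deriv_nonneg (convex_Icc _ _)
    · exact fun t ht => (hd t ht).continuousAt.continuousWithinAt
    · intro t ht
      rw [interior_Icc] at ht
      exact (hd t (Ioo_subset_Icc_self ht)).differentiableAt.differentiableWithinAt
    · intro t ht
      rw [interior_Icc] at ht
      rw [(hd t (Ioo_subset_Icc_self ht)).deriv]
      exact h' t (Ioo_subset_Icc_self ht)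
  have h1 := hmono (left_mem_Icc.mpr (by norm_num)) hy hy.1
  rw [h0] at h1
  exact h1

private lemma hasDerivAt_sub_rpow (e t : ℝ) (ht : t < 1) :
    HasDerivAt (fun s => (1 - s) ^ e) (-(e * (1 - t) ^ (e - 1))) t := by
  have h1 : HasDerivAt (fun s : ℝ => 1 - s) (-1) t := by
    simpa using (hasDerivAt_id t).const_sub 1
  have h2 : HasDerivAt (fun z : ℝ => z ^ e) (e * (1 - t) ^ (e - 1)) (1 - t) :=
    Real.hasDerivAt_rpow_const (Or.inl (by linarith))
  have h3 := h2.comp t h1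
  simp only [Function.comp_def, mul_neg, mul_one] at h3
  exact h3

private lemma hasDerivAt_add_rpow (e t : ℝ) (ht : -1 < t) :
    HasDerivAt (fun s => (1 + s) ^ e) (e * (1 + t) ^ (e - 1)) t := by
  have h1 : HasDerivAt (fun s : ℝ => 1 + s) (1) t := by
    simpa using (hasDerivAt_id t).const_add 1
  have h2 : HasDerivAt (fun z : ℝ => z ^ e) (e * (1 + t) ^ (e - 1)) (1 + t) :=
    Real.hasDerivAt_rpow_const (Or.inl (by linarith))
  have h3 := h2.comp t h1
  simp only [Function.comp_def, mul_neg, mul_one] at h3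
  exact h3

private lemma two_le_sum_rpow (γ : ℝ) (hγ : γ ≤ 0) (y : ℝ) (h0 : 0 ≤ y) (h1 : y ≤ 1/3) :
    2 ≤ (1 - y) ^ γ + (1 + y) ^ γ := by
  have hy1 : (0:ℝ) < 1 - y := by linarith
  have hy2 : (0:ℝ) < 1 + y := by linarith
  have e1 : (1 - y) ^ (γ/2) * (1 - y) ^ (γ/2) = (1 - y) ^ γ := by
    rw [← Real.rpow_add hy1]; norm_num
  have e2 : (1 + y) ^ (γ/2) * (1 + y) ^ (γ/2) = (1 + y) ^ γ := by
    rw [← Real.rpow_add hy2]; norm_num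
  have e3 : (1 - y) ^ (γ/2) * (1 + y) ^ (γ/2) = ((1 - y) * (1 + y)) ^ (γ/2) :=
    (Real.mul_rpow hy1.le hy2.le).symm
  have hprod : (0:ℝ) < (1 - y) * (1 + y) := mul_pos hy1 hy2
  have hprod1 : (1 - y) * (1 + y) ≤ 1 := by nlinarith
  have hge : (1:ℝ) ≤ ((1 - y) * (1 + y)) ^ (γ/2) := by
    have := Real.rpow_le_rpow_of_exponent_ge hprod hprod1 (show γ/2 ≤ 0 by linarith)
    rwa [Real.rpow_zero] at this
  nlinarith [sq_nonneg ((1 - y) ^ (γ/2) - (1 + y) ^ (γ/2))]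

private lemma G_nonneg (β : ℝ) (hβ1 : -1 < β) (hβ2 : β < 0) :
    ∀ y ∈ Icc (0:ℝ) (1/3),
      0 ≤ (1 - y) ^ (β - 1) - (1 + y) ^ (β - 1) - 2 * (1 - β) * y := by
  apply nonneg_of_deriv_aux _
    (fun t => (1 - β) * ((1 - t) ^ (β - 2) + (1 + t) ^ (β - 2) - 2))
  · intro t ht
    have ht1 : t < 1 := lt_of_le_of_lt ht.2 (by norm_num)
    have ht2 : -1 < t := lt_of_lt_of_le (by norm_num) ht.1
    have d1 := hasDerivAt_sub_rpow (β - 1) t ht1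
    have d2 := hasDerivAt_add_rpow (β - 1) t ht2
    have d3 : HasDerivAt (fun s : ℝ => 2 * (1 - β) * s) (2 * (1 - β)) t := by
      simpa using (hasDerivAt_id t).const_mul (2 * (1 - β))
    have := (d1.sub d2).sub d3
    refine (this).congr_deriv ?_
    have h : β - 1 - 1 = β - 2 := by ring
    rw [h]; ring
  · intro t ht
    have h := two_le_sum_rpow (β - 2) (by linarith) t ht.1 ht.2
    have : 0 ≤ 1 - β := by linarith
    nlinarith
  · norm_num

private lemma f_lower (β : ℝ) (hβ1 : -1 < β) (hβ2 : β < 0) :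
    ∀ y ∈ Icc (0:ℝ) (1/3),
      1 + β * (β - 1) / 2 * y ^ 2 ≤ ((1 - y) ^ β + (1 + y) ^ β) / 2 := by
  have key := nonneg_of_deriv_aux
    (fun t => ((1 - t) ^ β + (1 + t) ^ β) / 2 - (1 + β * (β - 1) / 2 * t ^ 2))
    (fun t => (-β/2) * ((1 - t) ^ (β - 1) - (1 + t) ^ (β - 1) - 2 * (1 - β) * t))
    (by
      intro t ht
      have ht1 : t < 1 := lt_of_le_of_lt ht.2 (by norm_num)
      have ht2 : -1 < t := lt_of_lt_of_le (by norm_num) ht.1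
      have d1 := hasDerivAt_sub_rpow β t ht1
      have d2 := hasDerivAt_add_rpow β t ht2
      have d3 : HasDerivAt (fun s : ℝ => 1 + β * (β - 1) / 2 * s ^ 2)
          (β * (β - 1) * t) t := by
        have := ((hasDerivAt_pow 2 t).const_mul (β * (β - 1) / 2)).const_add 1
        refine (this).congr_deriv ?_
        simp; ring
      have := ((d1.add d2).div_const 2).sub d3
      refine (this).congr_deriv ?_
      ring)
    (by
      intro t ht
      have hG := G_nonneg β hβ1 hβ2 t ht
      have : 0 ≤ -β/2 := by linarith
      nlinarith)
    (by norm_num)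
  intro y hy
  have := key y hy
  linarith

private lemma rpow_convex_exp (t : ℝ) (ht : 0 < t) (γ : ℝ) (h2 : γ ≤ -2) (h3 : -3 ≤ γ) :
    t ^ γ ≤ (-2 - γ) * t ^ (-3:ℝ) + (3 + γ) * t ^ (-2:ℝ) := by
  have h := convexOn_exp.2 (mem_univ (-3 * log t)) (mem_univ (-2 * log t))
      (show (0:ℝ) ≤ -2 - γ by linarith) (show (0:ℝ) ≤ 3 + γ by linarith) (by ring)
  simp only [smul_eq_mul] at h
  have e0 : t ^ γ = exp ((-2 - γ) * (-3 * log t) + (3 + γ) * (-2 * log t)) := by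
    rw [Real.rpow_def_of_pos ht]; congr 1; ring
  have e3 : t ^ (-3:ℝ) = exp (-3 * log t) := by
    rw [Real.rpow_def_of_pos ht]; congr 1; ring
  have e2 : t ^ (-2:ℝ) = exp (-2 * log t) := by
    rw [Real.rpow_def_of_pos ht]; congr 1; ring
  rw [e0, e3, e2]
  exact h

private lemma rpow_neg_nat (t : ℝ) (ht : 0 < t) (n : ℕ) :
    t ^ (-(n:ℝ)) = (t ^ n)⁻¹ := by
  rw [Real.rpow_neg ht.le, Real.rpow_natCast]

private lemma endpointA (y : ℝ) (h0 : 0 ≤ y) (h1 : y ≤ 1/3) :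
    (1 - y) ^ (-3:ℝ) + (1 + y) ^ (-3:ℝ) ≤ 2 + 17 * y ^ 2 := by
  have hy1 : (0:ℝ) < 1 - y := by linarith
  have hy2 : (0:ℝ) < 1 + y := by linarith
  rw [show (-3:ℝ) = -((3:ℕ):ℝ) by norm_num, rpow_neg_nat _ hy1, rpow_neg_nat _ hy2]
  rw [inv_add_inv (by positivity) (by positivity), div_le_iff₀ (by positivity)]
  have h9 : y^2 ≤ 1/9 := by nlinarith
  have t1 : 0 ≤ y^2 * (1/9 - y^2) := mul_nonneg (sq_nonneg y) (by linarith)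
  have t2 : 0 ≤ y^2*y^2*y^2 * (49 - 17*y^2) := by nlinarith
  nlinarith [t1, t2]

private lemma endpointB (y : ℝ) (h0 : 0 ≤ y) (h1 : y ≤ 1/3) :
    (1 - y) ^ (-2:ℝ) + (1 + y) ^ (-2:ℝ) ≤ 2 + 8 * y ^ 2 := by
  have hy1 : (0:ℝ) < 1 - y := by linarith
  have hy2 : (0:ℝ) < 1 + y := by linarith
  rw [show (-2:ℝ) = -((2:ℕ):ℝ) by norm_num, rpow_neg_nat _ hy1, rpow_neg_nat _ hy2]
  rw [inv_add_inv (by positivity) (by positivity), div_le_iff₀ (by positivity)]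
  nlinarith [sq_nonneg y, sq_nonneg (y*y), mul_nonneg h0 (sq_nonneg y)]

private lemma key3 (β : ℝ) (hβ1 : -1 < β) (hβ2 : β < 0) (y : ℝ) (h0 : 0 ≤ y) (h1 : y ≤ 1/3) :
    (1 - y) ^ (β - 2) + (1 + y) ^ (β - 2) ≤ 2 + (8 + 9 * (-β)) * y ^ 2 := by
  have hy1 : (0:ℝ) < 1 - y := by linarith
  have hy2 : (0:ℝ) < 1 + y := by linarith
  have c1 := rpow_convex_exp (1 - y) hy1 (β - 2) (by linarith) (by linarith)
  have c2 := rpow_convex_exp (1 + y) hy2 (β - 2) (by linarith) (by linarith)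
  have eA := endpointA y h0 h1
  have eB := endpointB y h0 h1
  have hl1 : (0:ℝ) ≤ -β := by linarith
  have hl2 : -β ≤ 1 := by linarith
  have hlam : -2 - (β - 2) = -β := by ring
  have hmu : 3 + (β - 2) = 1 - (-β) := by ring
  rw [hlam, hmu] at c1 c2
  nlinarith [c1, c2, eA, eB]

private lemma psi_nonneg (β : ℝ) (hβ1 : -1 < β) (hβ2 : β < 0) :
    ∀ y ∈ Icc (0:ℝ) (1/3),
      0 ≤ 2 * (β * (β - 1) / 2) * y + 4 * ((β * (β - 1) / 2) * (8 + 9 * (-β)) / 12) * y ^ 3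
          - (-β/2) * ((1 - y) ^ (β - 1) - (1 + y) ^ (β - 1)) := by
  apply nonneg_of_deriv_aux _
    (fun t => 2 * (β * (β - 1) / 2) + 12 * ((β * (β - 1) / 2) * (8 + 9 * (-β)) / 12) * t ^ 2
        - (β * (β - 1) / 2) * ((1 - t) ^ (β - 2) + (1 + t) ^ (β - 2)))
  · intro t ht
    have ht1 : t < 1 := lt_of_le_of_lt ht.2 (by norm_num)
    have ht2 : -1 < t := lt_of_lt_of_le (by norm_num) ht.1
    have d1 := hasDerivAt_sub_rpow (β - 1) t ht1
    have d2 := hasDerivAt_add_rpow (β - 1) t ht2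
    have dp : HasDerivAt (fun s : ℝ =>
        2 * (β * (β - 1) / 2) * s + 4 * ((β * (β - 1) / 2) * (8 + 9 * (-β)) / 12) * s ^ 3)
        (2 * (β * (β - 1) / 2) + 12 * ((β * (β - 1) / 2) * (8 + 9 * (-β)) / 12) * t ^ 2) t := by
      have hA := (hasDerivAt_id t).const_mul (2 * (β * (β - 1) / 2))
      have hB := (hasDerivAt_pow 3 t).const_mul (4 * ((β * (β - 1) / 2) * (8 + 9 * (-β)) / 12))
      refine (hA.add hB).congr_deriv ?_
      simp; ring
    have := dp.sub (((d1.sub d2)).const_mul (-β/2))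
    refine (this).congr_deriv ?_
    have h : β - 1 - 1 = β - 2 := by ring
    rw [h]; ring
  · intro t ht
    have hk := key3 β hβ1 hβ2 t ht.1 ht.2
    have hc : 0 ≤ β * (β - 1) / 2 := by nlinarith
    nlinarith
  · norm_num

private lemma f_upper (β : ℝ) (hβ1 : -1 < β) (hβ2 : β < 0) :
    ∀ y ∈ Icc (0:ℝ) (1/3),
      ((1 - y) ^ β + (1 + y) ^ β) / 2 ≤
        1 + β * (β - 1) / 2 * y ^ 2 + (β * (β - 1) / 2) * (8 + 9 * (-β)) / 12 * y ^ 4 := by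
  have key := nonneg_of_deriv_aux
    (fun t => 1 + β * (β - 1) / 2 * t ^ 2 + (β * (β - 1) / 2) * (8 + 9 * (-β)) / 12 * t ^ 4
        - ((1 - t) ^ β + (1 + t) ^ β) / 2)
    (fun t => 2 * (β * (β - 1) / 2) * t + 4 * ((β * (β - 1) / 2) * (8 + 9 * (-β)) / 12) * t ^ 3
        - (-β/2) * ((1 - t) ^ (β - 1) - (1 + t) ^ (β - 1)))
    (by
      intro t ht
      have ht1 : t < 1 := lt_of_le_of_lt ht.2 (by norm_num)
      have ht2 : -1 < t := lt_of_lt_of_le (by norm_num) ht.1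
      have d1 := hasDerivAt_sub_rpow β t ht1
      have d2 := hasDerivAt_add_rpow β t ht2
      have dp : HasDerivAt (fun s : ℝ =>
          1 + β * (β - 1) / 2 * s ^ 2 + (β * (β - 1) / 2) * (8 + 9 * (-β)) / 12 * s ^ 4)
          (2 * (β * (β - 1) / 2) * t + 4 * ((β * (β - 1) / 2) * (8 + 9 * (-β)) / 12) * t ^ 3) t := by
        have hA := ((hasDerivAt_pow 2 t).const_mul (β * (β - 1) / 2)).const_add 1
        have hB := (hasDerivAt_pow 4 t).const_mul ((β * (β - 1) / 2) * (8 + 9 * (-β)) / 12)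
        refine (hA.add hB).congr_deriv ?_
        simp; ring
      have := dp.sub ((d1.add d2).div_const 2)
      refine (this).congr_deriv ?_
      ring)
    (psi_nonneg β hβ1 hβ2)
    (by norm_num)
  intro y hy
  have := key y hy
  linarith

private lemma final_numeric (α : ℝ) (hα1 : 1 < α) (hα2 : α < 2) :
    (3 - α) * ((α - 1) / (3 - α) ^ 2 * (1 + (8 + 9 * ((α - 1) / (3 - α))) / 108))
      + (2 - α) * ((α - 1) / (3 - α) ^ 2 * (1 + (8 + 9 * ((α - 1) / (3 - α))) / 108)) ^ 2 / 9
      ≤ 7 * (α - 1) / (6 * (3 - α)) := by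
  have hd : (0:ℝ) < 3 - α := by linarith
  have ha : (0:ℝ) < α - 1 := by linarith
  have h2 : (0:ℝ) ≤ 2 - α := by linarith
  have key : 0 ≤ 972 + 6731*(2-α) + 68579*(2-α)^2 + 129997*(2-α)^3 + 86293*(2-α)^4
      + 18468*(2-α)^5 := by positivity
  have hne : (3 - α) ≠ 0 := ne_of_gt hd
  field_simp
  nlinarith [mul_nonneg ha.le key, key, pow_pos hd 3, pow_pos hd 4, pow_pos hd 5, pow_pos hd 6]

set_option maxHeartbeats 1000000 in
theorem sigma_alpha_K_bounds (K : ℕ) (hK : 3 ≤ K) (α : ℝ) (hα1 : 1 < α) (hα2 : α < 2) :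
    1 + (α - 1) / (3 - α) * (1 / (K : ℝ) ^ 2) ≤
      (((1 - 1 / (K : ℝ)) ^ ((1 - α) / (3 - α))
          + (1 + 1 / (K : ℝ)) ^ ((1 - α) / (3 - α))) / 2) ^ (3 - α) ∧
    (((1 - 1 / (K : ℝ)) ^ ((1 - α) / (3 - α))
        + (1 + 1 / (K : ℝ)) ^ ((1 - α) / (3 - α))) / 2) ^ (3 - α) ≤
      1 + 7 * (α - 1) / (6 * (3 - α)) * (1 / (K : ℝ) ^ 2) := by
  have hd : (0:ℝ) < 3 - α := by linarith
  have ha : (0:ℝ) < α - 1 := by linarith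
  set β : ℝ := (1 - α) / (3 - α) with hβdef
  have hβ2 : β < 0 := div_neg_of_neg_of_pos (by linarith) hd
  have hβ1 : -1 < β := by
    rw [hβdef, lt_div_iff₀ hd]; linarith
  have hK0 : (0:ℝ) < (K:ℝ) := by
    have : (3:ℝ) ≤ (K:ℝ) := by exact_mod_cast hK
    linarith
  set x : ℝ := 1 / (K:ℝ) with hxdef
  have hx0 : 0 < x := by rw [hxdef]; positivity
  have hx3 : x ≤ 1/3 := by
    rw [hxdef]
    have h3K : (3:ℝ) ≤ (K:ℝ) := by exact_mod_cast hK
    rw [div_le_div_iff₀ hK0 (by norm_num)]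
    linarith
  have hmem : x ∈ Set.Icc (0:ℝ) (1/3) := ⟨hx0.le, hx3⟩
  have hx2 : x^2 = 1/(K:ℝ)^2 := by rw [hxdef, div_pow, one_pow]
  have hx29 : x^2 ≤ 1/9 := by nlinarith
  have hc0 : 0 ≤ β * (β - 1) / 2 := by nlinarith
  have hfl := f_lower β hβ1 hβ2 x hmem
  have hfu := f_upper β hβ1 hβ2 x hmem
  have hc : β * (β - 1) / 2 = (α - 1) / (3 - α)^2 := by
    rw [hβdef]; field_simp; ring
  have hlam : -β = (α - 1) / (3 - α) := by rw [hβdef]; ring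
  clear_value β x
  constructor
  · -- lower bound
    have h1 : (0:ℝ) ≤ 1 + β * (β - 1) / 2 * x^2 := by nlinarith
    have h2 : (1 + β * (β - 1) / 2 * x^2) ^ (3-α) ≤
        (((1 - x) ^ β + (1 + x) ^ β) / 2) ^ (3-α) :=
      Real.rpow_le_rpow h1 hfl (by linarith)
    have h3 : 1 + (3-α) * (β * (β - 1) / 2 * x^2) ≤ (1 + β * (β - 1) / 2 * x^2) ^ (3-α) := by
      have := one_add_mul_self_le_rpow_one_add
        (show (-1:ℝ) ≤ β * (β - 1) / 2 * x^2 by nlinarith) (show (1:ℝ) ≤ 3 - α by linarith)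
      linarith
    have h4 : (3-α) * (β * (β - 1) / 2) = (α - 1) / (3 - α) := by
      rw [hc]; field_simp
    have h5 : 1 + (α - 1) / (3 - α) * (1 / (K:ℝ)^2) = 1 + (3-α) * (β * (β - 1) / 2 * x^2) := by
      rw [← hx2, ← h4]; ring
    rw [h5]
    exact le_trans h3 h2
  · -- upper bound
    set c : ℝ := β * (β - 1) / 2 with hcdef
    set C : ℝ := c * (8 + 9 * (-β)) / 12 with hCdef
    have hC0 : 0 ≤ C := by
      rw [hCdef]
      have : (0:ℝ) ≤ 8 + 9 * (-β) := by linarith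
      positivity
    set E : ℝ := c * x^2 + C * x^4 with hEdef
    have hE0 : 0 ≤ E := by rw [hEdef]; positivity
    clear_value c C E
    have hfpos : (0:ℝ) ≤ ((1 - x) ^ β + (1 + x) ^ β) / 2 := by
      have : (0:ℝ) ≤ (1 - x) ^ β := Real.rpow_nonneg (by linarith) _
      have : (0:ℝ) ≤ (1 + x) ^ β := Real.rpow_nonneg (by linarith) _
      linarith
    have hfuE : ((1 - x) ^ β + (1 + x) ^ β) / 2 ≤ 1 + E := by
      rw [hEdef]; linarith
    have h1 : (((1 - x) ^ β + (1 + x) ^ β) / 2) ^ (3-α) ≤ (1 + E) ^ (3-α) :=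
      Real.rpow_le_rpow hfpos hfuE (by linarith)
    have hEpos : (0:ℝ) < 1 + E := by linarith
    have h2 : (1 + E) ^ (3-α) = (1 + E) * (1 + E) ^ (2-α) := by
      rw [show (3-α) = 1 + (2-α) by ring, Real.rpow_add hEpos, Real.rpow_one]
    have h3 : (1 + E) ^ (2-α) ≤ 1 + (2-α) * E := by
      have := rpow_one_add_le_one_add_mul_self (show (-1:ℝ) ≤ E by linarith)
        (show (0:ℝ) ≤ 2 - α by linarith) (show (2:ℝ) - α ≤ 1 by linarith)
      linarith
    have h4 : (1 + E) * ((1 + E) ^ (2-α)) ≤ 1 + (3-α) * E + (2-α) * E^2 := by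
      have h := mul_le_mul_of_nonneg_left h3 hEpos.le
      have e : (1 + E) * (1 + (2-α) * E) = 1 + (3-α) * E + (2-α) * E^2 := by ring
      exact h.trans e.le
    -- numeric bound
    set cκ : ℝ := (α - 1) / (3 - α) ^ 2 * (1 + (8 + 9 * ((α - 1) / (3 - α))) / 108) with hcκdef
    have hcκ0 : 0 ≤ cκ := by
      rw [hcκdef]
      have h9 : (0:ℝ) ≤ (α - 1) / (3 - α) := by positivity
      positivity
    clear_value cκ
    have hEb : E ≤ cκ * x^2 := by
      have hq : x^4 ≤ (1/9) * x^2 := by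
        nlinarith [mul_nonneg (sq_nonneg x) (sub_nonneg.2 hx29)]
      have hx4 : C * x^4 ≤ C * (1/9) * x^2 := by
        have := mul_le_mul_of_nonneg_left hq hC0
        linarith [this]
      have hkey : c + C * (1/9) = cκ := by
        rw [hCdef, hlam, hc, hcκdef]; field_simp; ring
      nlinarith [sq_nonneg x]
    have h5 : (3-α) * E ≤ (3-α) * cκ * x^2 := by nlinarith
    have h6 : (2-α) * E^2 ≤ (2-α) * cκ^2 * (1/9) * x^2 := by
      have hE2 : E^2 ≤ (cκ * x^2)^2 := by nlinarith
      have hx4 : (cκ * x^2)^2 ≤ cκ^2 * (1/9) * x^2 := by nlinarith [sq_nonneg (cκ*x)]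
      nlinarith [mul_le_mul_of_nonneg_left hE2 (show (0:ℝ) ≤ 2-α by linarith),
        mul_le_mul_of_nonneg_left hx4 (show (0:ℝ) ≤ 2-α by linarith)]
    have hnum := final_numeric α hα1 hα2
    have h7 : (3-α) * cκ * x^2 + (2-α) * cκ^2 * (1/9) * x^2 ≤
        7 * (α - 1) / (6 * (3 - α)) * x^2 := by
      have := mul_le_mul_of_nonneg_right hnum (sq_nonneg x)
      rw [hcκdef]
      nlinarith [this]
    calc (((1 - x) ^ β + (1 + x) ^ β) / 2) ^ (3-α) ≤ (1 + E) ^ (3-α) := h1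
      _ = (1 + E) * (1 + E) ^ (2-α) := h2
      _ ≤ 1 + (3-α) * E + (2-α) * E^2 := h4
      _ ≤ 1 + ((3-α) * cκ * x^2 + (2-α) * cκ^2 * (1/9) * x^2) := by linarith
      _ ≤ 1 + 7 * (α - 1) / (6 * (3 - α)) * x^2 := by linarith
      _ = 1 + 7 * (α - 1) / (6 * (3 - α)) * (1 / (K:ℝ)^2) := by rw [← hx2]
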